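/- arXiv:1305.5941 — 2 statements merged into one kernel-verified Lean document; each statement's English description precedes it below -/
import Mathlib

section
/- A bipartite state ρ_AB of dimension m×n is separable if and only if there exist positive integers d₁, d₂ and a state ρ_AA'BB' on (ℂ^m⊗ℂ^{d₁})⊗(ℂ^n⊗ℂ^{d₂}) that is classical-classical across the (AA')|(BB') cut and whose partial trace over the A' and B' factors equals ρ_AB; moreover, when ρ_AB is separable such a classical-classical extension exists with d₁ = d₂ = m²n² (so that ρ_AA'BB' has dimension m³n² × m²n³). -/
open scoped Kronecker ComplexOrder Matrix

noncomputable section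

/-- A quantum state (density matrix): positive semidefinite with trace 1. -/
def IsState {α : Type*} [Fintype α] (ρ : Matrix α α ℂ) : Prop :=
  ρ.PosSemidef ∧ ρ.trace = 1

/-- The rank-one matrix `ψ ψ*`. -/
def vecState {α : Type*} (ψ : α → ℂ) : Matrix α α ℂ :=
  fun i j => ψ i * star (ψ j)

/-- Kronecker product of two vectors. -/
def kronVec {α β : Type*} (a : α → ℂ) (b : β → ℂ) : α × β → ℂ :=
  fun p => a p.1 * b p.2

/-- Partial trace over the first tensor factor. -/
def ptrace1 {α β : Type*} [Fintype α] (M : Matrix (α × β) (α × β) ℂ) : Matrix β β ℂ :=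
  fun k k' => ∑ i, M (i, k) (i, k')

/-- Partial trace over the second tensor factor. -/
def ptrace2 {α β : Type*} [Fintype β] (M : Matrix (α × β) (α × β) ℂ) : Matrix α α ℂ :=
  fun i i' => ∑ k, M (i, k) (i', k)

/-- Partial trace over the third factor of a triple tensor product. -/
def ptrace3 {α β γ : Type*} [Fintype γ]
    (M : Matrix (α × β × γ) (α × β × γ) ℂ) : Matrix (α × β) (α × β) ℂ :=
  fun p q => ∑ t, M (p.1, (p.2, t)) (q.1, (q.2, t))

/-- Partial trace over the middle factor of a triple tensor product. -/
def ptraceMid {α β γ : Type*} [Fintype β]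
    (M : Matrix (α × β × γ) (α × β × γ) ℂ) : Matrix (α × γ) (α × γ) ℂ :=
  fun p q => ∑ k, M (p.1, (k, p.2)) (q.1, (k, q.2))

/-- Partial trace over the primed (A' and B') factors of a state on (A⊗A')⊗(B⊗B'). -/
def ptracePrimes {α α' β β' : Type*} [Fintype α'] [Fintype β']
    (M : Matrix ((α × α') × β × β') ((α × α') × β × β') ℂ) : Matrix (α × β) (α × β) ℂ :=
  fun p q => ∑ s, ∑ t, M ((p.1, s), (p.2, t)) ((q.1, s), (q.2, t))

/-- Partial trace over the unprimed (A and B) factors of a state on (A⊗A')⊗(B⊗B'). -/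
def ptraceUnprimed {α α' β β' : Type*} [Fintype α] [Fintype β]
    (M : Matrix ((α × α') × β × β') ((α × α') × β × β') ℂ) : Matrix (α' × β') (α' × β') ℂ :=
  fun p q => ∑ i, ∑ k, M ((i, p.1), (k, p.2)) ((i, q.1), (k, q.2))

/-- Von Neumann entropy: `S(ρ) = -∑ λᵢ log λᵢ` where λᵢ are the eigenvalues. -/
def vnEntropy {α : Type*} [Fintype α] [DecidableEq α] (ρ : Matrix α α ℂ) : ℝ :=
  if h : ρ.IsHermitian then ∑ i, Real.negMulLog (h.eigenvalues i) else 0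

/-- Entanglement of formation. -/
def EoF {α β : Type*} [Fintype α] [Fintype β] [DecidableEq α]
    (ρ : Matrix (α × β) (α × β) ℂ) : ℝ :=
  sInf {x : ℝ | ∃ (k : ℕ) (p : Fin k → ℝ) (ψ : Fin k → α × β → ℂ),
    (∀ i, 0 ≤ p i) ∧ (∀ i, star (ψ i) ⬝ᵥ ψ i = 1) ∧
    (∑ i, (p i : ℂ) • vecState (ψ i)) = ρ ∧
    x = ∑ i, p i * vnEntropy (ptrace2 (vecState (ψ i)))}

/-- Separability of a bipartite state. -/
def IsSepState {α β : Type*} [Fintype α] [Fintype β]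
    (ρ : Matrix (α × β) (α × β) ℂ) : Prop :=
  ∃ (k : ℕ) (p : Fin k → ℝ) (a : Fin k → α → ℂ) (b : Fin k → β → ℂ),
    (∀ i, 0 ≤ p i) ∧ (∑ i, p i) = 1 ∧
    (∀ i, star (a i) ⬝ᵥ a i = 1) ∧ (∀ i, star (b i) ⬝ᵥ b i = 1) ∧
    ρ = ∑ i, (p i : ℂ) • (vecState (a i) ⊗ₖ vecState (b i))

/-- Classical-classical bipartite states. -/
def IsCC {α β : Type*} [Fintype α] [Fintype β] [DecidableEq α] [DecidableEq β]
    (ρ : Matrix (α × β) (α × β) ℂ) : Prop :=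
  ∃ (a : α → α → ℂ) (b : β → β → ℂ) (p : α → β → ℝ),
    (∀ i j, star (a i) ⬝ᵥ a j = if i = j then 1 else 0) ∧
    (∀ i j, star (b i) ⬝ᵥ b j = if i = j then 1 else 0) ∧
    (∀ i j, 0 ≤ p i j) ∧ (∑ i, ∑ j, p i j) = 1 ∧
    ρ = ∑ i, ∑ j, (p i j : ℂ) • (vecState (a i) ⊗ₖ vecState (b j))

/-- Quantum-classical bipartite states (classical on the second factor). -/
def IsQC {α β : Type*} [Fintype α] [Fintype β] [DecidableEq β]
    (ρ : Matrix (α × β) (α × β) ℂ) : Prop :=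
  ∃ (b : β → β → ℂ) (σ : β → Matrix α α ℂ) (p : β → ℝ),
    (∀ i j, star (b i) ⬝ᵥ b j = if i = j then 1 else 0) ∧
    (∀ i, IsState (σ i)) ∧ (∀ i, 0 ≤ p i) ∧ (∑ i, p i) = 1 ∧
    ρ = ∑ i, (p i : ℂ) • (σ i ⊗ₖ vecState (b i))

/-- A POVM: finitely many positive semidefinite operators summing to the identity. -/
def IsPOVM {γ : Type*} [Fintype γ] [DecidableEq γ] {k : ℕ}
    (P : Fin k → Matrix γ γ ℂ) : Prop :=
  (∀ i, (P i).PosSemidef) ∧ (∑ i, P i) = 1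

/-- A von Neumann measurement: pairwise-orthogonal orthogonal projections summing to I. -/
def IsVNMeas {γ : Type*} [Fintype γ] [DecidableEq γ] {k : ℕ}
    (P : Fin k → Matrix γ γ ℂ) : Prop :=
  (∀ i, (P i).IsHermitian) ∧ (∀ i, P i * P i = P i) ∧
  (∀ i j, i ≠ j → P i * P j = 0) ∧ (∑ i, P i) = 1

/-- The term `pᵢ S(ρ_A^i)` for a measurement operator `P` on the second subsystem,
with the convention that the term vanishes when `pᵢ = 0`. -/
def measTerm {α β : Type*} [Fintype α] [Fintype β] [DecidableEq α] [DecidableEq β]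
    (ρ : Matrix (α × β) (α × β) ℂ) (P : Matrix β β ℂ) : ℝ :=
  if _h : (Matrix.trace (ρ * ((1 : Matrix α α ℂ) ⊗ₖ P))).re = 0 then 0
  else (Matrix.trace (ρ * ((1 : Matrix α α ℂ) ⊗ₖ P))).re *
    vnEntropy ((((Matrix.trace (ρ * ((1 : Matrix α α ℂ) ⊗ₖ P))).re : ℂ))⁻¹ •
      ptrace2 (ρ * ((1 : Matrix α α ℂ) ⊗ₖ P)))

/-- Quantum discord with POVM measurements on the second subsystem. -/
def discordP {α β : Type*} [Fintype α] [Fintype β] [DecidableEq α] [DecidableEq β]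
    (ρ : Matrix (α × β) (α × β) ℂ) : ℝ :=
  vnEntropy (ptrace1 ρ) - vnEntropy ρ +
    sInf {x : ℝ | ∃ (k : ℕ) (P : Fin k → Matrix β β ℂ),
      IsPOVM P ∧ x = ∑ i, measTerm ρ (P i)}

/-- Quantum discord with von Neumann measurements on the second subsystem. -/
def discordN {α β : Type*} [Fintype α] [Fintype β] [DecidableEq α] [DecidableEq β]
    (ρ : Matrix (α × β) (α × β) ℂ) : ℝ :=
  vnEntropy (ptrace1 ρ) - vnEntropy ρ +
    sInf {x : ℝ | ∃ (k : ℕ) (P : Fin k → Matrix β β ℂ),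
      IsVNMeas P ∧ x = ∑ i, measTerm ρ (P i)}

/-- The trace norm `‖X‖₁ = tr √(X* X)`. -/
def traceNorm {α : Type*} [Fintype α] [DecidableEq α] (X : Matrix α α ℂ) : ℝ :=
  (((Matrix.posSemidef_conjTranspose_mul_self X).1.eigenvectorUnitary : Matrix α α ℂ) *
    Matrix.diagonal (fun i => ((Real.sqrt ((Matrix.posSemidef_conjTranspose_mul_self X).1.eigenvalues i) : ℝ) : ℂ)) *
    (star (Matrix.posSemidef_conjTranspose_mul_self X).1.eigenvectorUnitary : Matrix α α ℂ)).trace.re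

/-- The Frobenius norm `‖X‖₂ = √(tr (X* X))`. -/
def frobNorm {α β : Type*} [Fintype α] [Fintype β] (X : Matrix α β ℂ) : ℝ :=
  Real.sqrt (Matrix.trace (Xᴴ * X)).re

/-- Matrix logarithm taken on the support (eigenvalue 0 is sent to 0). -/
def matLog {α : Type*} [Fintype α] [DecidableEq α] (A : Matrix α α ℂ) : Matrix α α ℂ :=
  if h : A.IsHermitian then
    (Matrix.IsHermitian.eigenvectorUnitary h : Matrix α α ℂ) *
      Matrix.diagonal (fun i => if h.eigenvalues i = 0 then 0
        else (Real.log (h.eigenvalues i) : ℂ)) *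
      (star (Matrix.IsHermitian.eigenvectorUnitary h) : Matrix α α ℂ)
  else 0

end

set_option linter.unusedSectionVars false
section Helpers
open Matrix Finset
variable {α β γ δ : Type*} [Fintype α] [Fintype β] [Fintype γ] [Fintype δ]

lemma kronVec_dot (a c : α → ℂ) (b d : β → ℂ) :
    star (kronVec a b) ⬝ᵥ kronVec c d = (star a ⬝ᵥ c) * (star b ⬝ᵥ d) := by
  simp only [dotProduct, kronVec, Pi.star_apply, Fintype.sum_prod_type, star_mul']
  rw [Finset.sum_mul_sum]
  exact Finset.sum_congr rfl fun i _ => Finset.sum_congr rfl fun j _ => by ring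

lemma vecState_posSemidef (ψ : α → ℂ) : (vecState ψ).PosSemidef := by
  have h : vecState ψ = (Matrix.of fun (_ : Unit) j => star (ψ j))ᴴ *
      (Matrix.of fun (_ : Unit) j => star (ψ j)) := by
    ext i j
    simp [vecState, Matrix.mul_apply, Matrix.conjTranspose_apply]
  rw [h]
  exact Matrix.posSemidef_conjTranspose_mul_self _

lemma trace_vecState (ψ : α → ℂ) : (vecState ψ).trace = star ψ ⬝ᵥ ψ := by
  simp [Matrix.trace, vecState, dotProduct, Matrix.diag, mul_comm]

lemma vecState_kronVec (a : α → ℂ) (b : β → ℂ) :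
    vecState (kronVec a b) = vecState a ⊗ₖ vecState b := by
  ext ⟨i, k⟩ ⟨i', k'⟩
  simp [vecState, kronVec, Matrix.kroneckerMap_apply]
  ring

lemma dot_self_coe (v : α → ℂ) :
    star v ⬝ᵥ v = ((∑ i, Complex.normSq (v i) : ℝ) : ℂ) := by
  push_cast
  simp [dotProduct, Complex.normSq_eq_conj_mul_self]

end Helpers
section Helpers2
open Matrix Finset
variable {α β γ δ : Type*} [Fintype α] [Fintype β] [Fintype γ] [Fintype δ]

lemma posSemidef_real_smul {M : Matrix α α ℂ} (hM : M.PosSemidef) {r : ℝ} (hr : 0 ≤ r) :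
    ((r : ℂ) • M).PosSemidef := by
  refine Matrix.PosSemidef.of_dotProduct_mulVec_nonneg ?_ fun x => ?_
  · show ((r : ℂ) • M)ᴴ = _
    rw [Matrix.conjTranspose_smul, hM.1.eq]
    congr 1
    simp [Complex.star_def, Complex.conj_ofReal]
  · rw [Matrix.smul_mulVec, dotProduct_smul, smul_eq_mul]
    exact mul_nonneg (by exact_mod_cast Complex.zero_le_real.2 hr) (hM.dotProduct_mulVec_nonneg x)

lemma posSemidef_sum {ι : Type*} (s : Finset ι) (f : ι → Matrix α α ℂ)
    (h : ∀ i ∈ s, (f i).PosSemidef) : (∑ i ∈ s, f i).PosSemidef := by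
  classical
  induction s using Finset.induction with
  | empty => simpa using Matrix.PosSemidef.zero
  | insert _ _ hx ih =>
    rw [Finset.sum_insert hx]
    exact (h _ (Finset.mem_insert_self _ _)).add
      (ih fun i hi => h i (Finset.mem_insert_of_mem hi))

lemma sum_dite_extend {d k : ℕ} (hk : k ≤ d) (p : Fin k → ℝ) :
    ∑ s : Fin d, (if h : (s : ℕ) < k then p ⟨s, h⟩ else 0) = ∑ i, p i := by
  have h2 : ∑ i : Fin k, p i
      = ∑ s ∈ Finset.univ.map (Fin.castLEEmb hk), (if h : (s : ℕ) < k then p ⟨s, h⟩ else 0) := by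
    rw [Finset.sum_map]
    refine Finset.sum_congr rfl fun i _ => ?_
    have : ((Fin.castLEEmb hk i : Fin d) : ℕ) = (i : ℕ) := rfl
    rw [dif_pos (this ▸ i.isLt)]
    exact congrArg p (Fin.ext this.symm)
  rw [h2]
  refine (Finset.sum_subset (Finset.subset_univ _) ?_).symm
  intro x _ hx
  have hnx : ¬ (x : ℕ) < k := by
    intro hlt
    exact hx (Finset.mem_map.2 ⟨⟨(x : ℕ), hlt⟩, Finset.mem_univ _, Fin.ext rfl⟩)
  simp [hnx]

lemma ptracePrimes_add (M N : Matrix ((α × β) × γ × δ) ((α × β) × γ × δ) ℂ) :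
    ptracePrimes (M + N) = ptracePrimes M + ptracePrimes N := by
  ext p q
  simp [ptracePrimes, Matrix.add_apply, Finset.sum_add_distrib]

lemma ptracePrimes_sum {ι : Type*} (s : Finset ι)
    (M : ι → Matrix ((α × β) × γ × δ) ((α × β) × γ × δ) ℂ) :
    ptracePrimes (∑ i ∈ s, M i) = ∑ i ∈ s, ptracePrimes (M i) := by
  classical
  induction s using Finset.induction with
  | empty =>
    ext p q
    simp [ptracePrimes]
  | insert _ _ hx ih =>
    rw [Finset.sum_insert hx, Finset.sum_insert hx, ← ih, ptracePrimes_add]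

lemma ptracePrimes_smul (c : ℂ) (M : Matrix ((α × β) × γ × δ) ((α × β) × γ × δ) ℂ) :
    ptracePrimes (c • M) = c • ptracePrimes M := by
  ext p q
  simp only [ptracePrimes, Matrix.smul_apply, smul_eq_mul, Finset.mul_sum]

lemma ptracePrimes_pure (u : α → ℂ) (e : β → ℂ) (v : γ → ℂ) (f : δ → ℂ)
    (he : star e ⬝ᵥ e = 1) (hf : star f ⬝ᵥ f = 1) :
    ptracePrimes (vecState (kronVec u e) ⊗ₖ vecState (kronVec v f)) =
      vecState u ⊗ₖ vecState v := by
  have he' : (∑ s, e s * star (e s)) = 1 := by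
    simpa [dotProduct, mul_comm] using he
  have hf' : (∑ t, f t * star (f t)) = 1 := by
    simpa [dotProduct, mul_comm] using hf
  ext ⟨i, k⟩ ⟨i', k'⟩
  simp only [ptracePrimes, vecState, kronVec, Matrix.kroneckerMap_apply, star_mul']
  trans (∑ s, e s * star (e s)) * ((∑ t, f t * star (f t)) *
    (u i * star (u i') * (v k * star (v k'))))
  · rw [Finset.sum_mul]
    refine Finset.sum_congr rfl fun s _ => ?_
    rw [Finset.sum_mul, Finset.mul_sum]
    exact Finset.sum_congr rfl fun t _ => by ring
  · rw [he', hf']; ring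

lemma ptracePrimes_kron (a : (α × β) → ℂ) (b : (γ × δ) → ℂ) :
    ptracePrimes (vecState a ⊗ₖ vecState b) =
      ∑ s, ∑ t, (vecState (fun i => a (i, s)) ⊗ₖ vecState (fun k => b (k, t))) := by
  ext ⟨i, k⟩ ⟨i', k'⟩
  simp [ptracePrimes, vecState, Matrix.kroneckerMap_apply, Matrix.sum_apply]

end Helpers2
section Helpers3
open Matrix Finset

lemma exists_onb_extension {m : ℕ} (hm : 0 < m) (v : Fin m → ℂ) (hv : star v ⬝ᵥ v = 1) :
    ∃ c : Fin m → Fin m → ℂ,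
      (∀ i j, star (c i) ⬝ᵥ c j = if i = j then 1 else 0) ∧ c ⟨0, hm⟩ = v := by
  classical
  have hcard : Module.finrank ℂ (EuclideanSpace ℂ (Fin m)) = Fintype.card (Fin m) := by
    simp
  let v' : Fin m → EuclideanSpace ℂ (Fin m) := fun _ => (WithLp.equiv 2 _).symm v
  have hinner : ∀ x y : Fin m → ℂ,
      (inner ℂ ((WithLp.equiv 2 (Fin m → ℂ)).symm x) ((WithLp.equiv 2 (Fin m → ℂ)).symm y) : ℂ)
        = star x ⬝ᵥ y := fun x y => by
    rw [dotProduct_comm]; rfl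
  have hv' : Orthonormal ℂ (({(⟨0, hm⟩ : Fin m)} : Set (Fin m)).restrict v') := by
    rw [orthonormal_iff_ite]
    rintro ⟨i, hi⟩ ⟨j, hj⟩
    simp only [Set.mem_singleton_iff] at hi hj
    have hij : (⟨i, hi⟩ : ({(⟨0, hm⟩ : Fin m)} : Set (Fin m))) = ⟨j, hj⟩ := by
      apply Subtype.ext
      simp only [hi, hj]
    rw [if_pos hij]
    show (inner ℂ (v' i) (v' j) : ℂ) = 1
    rw [show v' i = v' j from rfl]
    rw [hinner v v]
    exact hv
  obtain ⟨b, hb⟩ := hv'.exists_orthonormalBasis_extension_of_card_eq hcard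
  refine ⟨fun i => WithLp.equiv 2 _ (b i), fun i j => ?_, ?_⟩
  · have := orthonormal_iff_ite.mp b.orthonormal i j
    rw [← this]
    rw [← hinner]
    congr 1 <;> simp
  · have := hb ⟨0, hm⟩ rfl
    show WithLp.equiv 2 _ (b ⟨0, hm⟩) = v
    rw [this]
    rfl

end Helpers3
section Helpers4
open Matrix Finset

lemma delta_dot {dd : ℕ} (s t : Fin dd) :
    (star (fun x => if x = s then (1:ℂ) else 0) ⬝ᵥ fun x => if x = t then (1:ℂ) else 0)
      = if s = t then 1 else 0 := by
  simp only [dotProduct, Pi.star_apply, apply_ite (star : ℂ → ℂ), star_one, star_zero,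
    ite_mul, one_mul, zero_mul]
  rw [Finset.sum_ite_eq' Finset.univ s (fun x => if x = t then (1:ℂ) else 0)]
  simp

lemma sum_dite_extend' {M : Type*} [AddCommMonoid M] {d k : ℕ} (hk : k ≤ d) (p : Fin k → M) :
    ∑ s : Fin d, (if h : (s : ℕ) < k then p ⟨s, h⟩ else 0) = ∑ i, p i := by
  have h2 : ∑ i : Fin k, p i
      = ∑ s ∈ Finset.univ.map (Fin.castLEEmb hk), (if h : (s : ℕ) < k then p ⟨s, h⟩ else 0) := by
    rw [Finset.sum_map]
    refine Finset.sum_congr rfl fun i _ => ?_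
    have : ((Fin.castLEEmb hk i : Fin d) : ℕ) = (i : ℕ) := rfl
    rw [dif_pos (this ▸ i.isLt)]
    exact congrArg p (Fin.ext this.symm)
  rw [h2]
  refine (Finset.sum_subset (Finset.subset_univ _) ?_).symm
  intro x _ hx
  have hnx : ¬ (x : ℕ) < k := by
    intro hlt
    exact hx (Finset.mem_map.2 ⟨⟨(x : ℕ), hlt⟩, Finset.mem_univ _, Fin.ext rfl⟩)
  simp [hnx]

lemma ite_sum_zero {M : Type*} [AddCommMonoid M] {ι : Type*} [Fintype ι]
    (c : Prop) [Decidable c] (g : ι → M) :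
    ∑ j : ι, (if c then g j else 0) = if c then ∑ j, g j else 0 := by
  split_ifs <;> simp

lemma double_sum_ite {α₁ β₁ γ : Type*} [Fintype α₁] [Fintype β₁] [Fintype γ]
    [DecidableEq α₁] [DecidableEq β₁] [DecidableEq γ] {M : Type*} [AddCommMonoid M]
    (i0 : α₁) (j0 : β₁) (F : α₁ → γ → β₁ → γ → M) :
    (∑ I : α₁ × γ, ∑ J : β₁ × γ,
      if I.1 = i0 then if J.1 = j0 then if J.2 = I.2 then F I.1 I.2 J.1 J.2 else 0 else 0 else 0)
      = ∑ s : γ, F i0 s j0 s := by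
  have hJ : ∀ (i : α₁) (s : γ),
      (∑ J : β₁ × γ, if i = i0 then if J.1 = j0 then if J.2 = s then
          F i s J.1 J.2 else 0 else 0 else 0)
      = if i = i0 then F i s j0 s else 0 := by
    intro i s
    rw [_root_.ite_sum_zero]
    by_cases h : i = i0
    · rw [if_pos h, if_pos h, Fintype.sum_prod_type]
      rw [Finset.sum_congr rfl fun j _ => ite_sum_zero (j = j0) (fun t => if t = s then F i s j t else 0)]
      rw [Finset.sum_ite_eq' Finset.univ j0 (fun j => ∑ t, if t = s then F i s j t else 0)]
      rw [if_pos (Finset.mem_univ _)]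
      rw [Finset.sum_ite_eq' Finset.univ s (fun t => F i s j0 t)]
      rw [if_pos (Finset.mem_univ _)]
    · rw [if_neg h, if_neg h]
  calc (∑ I : α₁ × γ, ∑ J : β₁ × γ,
      if I.1 = i0 then if J.1 = j0 then if J.2 = I.2 then F I.1 I.2 J.1 J.2 else 0 else 0 else 0)
      = ∑ I : α₁ × γ, if I.1 = i0 then F I.1 I.2 j0 I.2 else 0 :=
        Finset.sum_congr rfl fun I _ => hJ I.1 I.2
    _ = ∑ s : γ, F i0 s j0 s := by
        rw [Fintype.sum_prod_type]
        rw [Finset.sum_congr rfl fun i _ => ite_sum_zero (i = i0) (fun s => F i s j0 s)]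
        rw [Finset.sum_ite_eq' Finset.univ i0 (fun i => ∑ s, F i s j0 s)]
        rw [if_pos (Finset.mem_univ _)]

lemma extension_of_decomp {m n d k : ℕ} (hm : 0 < m) (hn : 0 < n) (hk : k ≤ d)
    (p : Fin k → ℝ) (A : Fin k → Fin m → ℂ) (B : Fin k → Fin n → ℂ)
    (hp : ∀ i, 0 ≤ p i) (hp1 : ∑ i, p i = 1)
    (hA : ∀ i, star (A i) ⬝ᵥ A i = 1) (hB : ∀ i, star (B i) ⬝ᵥ B i = 1) :
    ∃ ρext : Matrix ((Fin m × Fin d) × Fin n × Fin d) ((Fin m × Fin d) × Fin n × Fin d) ℂ,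
      IsState ρext ∧ IsCC ρext ∧
      ptracePrimes ρext = ∑ i, (p i : ℂ) • (vecState (A i) ⊗ₖ vecState (B i)) := by
  classical
  have exC : ∀ s : Fin d, ∃ c : Fin m → Fin m → ℂ,
      (∀ i j, star (c i) ⬝ᵥ c j = if i = j then 1 else 0) ∧
      (∀ h : (s : ℕ) < k, c ⟨0, hm⟩ = A ⟨s, h⟩) := by
    intro s
    by_cases h : (s : ℕ) < k
    · obtain ⟨c, hc1, hc2⟩ := exists_onb_extension hm (A ⟨s, h⟩) (hA _)
      exact ⟨c, hc1, fun _ => hc2⟩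
    · refine ⟨fun i x => if x = i then 1 else 0, fun i j => ?_, fun h' => absurd h' h⟩
      rw [delta_dot i j]
  have exD : ∀ s : Fin d, ∃ c : Fin n → Fin n → ℂ,
      (∀ i j, star (c i) ⬝ᵥ c j = if i = j then 1 else 0) ∧
      (∀ h : (s : ℕ) < k, c ⟨0, hn⟩ = B ⟨s, h⟩) := by
    intro s
    by_cases h : (s : ℕ) < k
    · obtain ⟨c, hc1, hc2⟩ := exists_onb_extension hn (B ⟨s, h⟩) (hB _)
      exact ⟨c, hc1, fun _ => hc2⟩
    · refine ⟨fun i x => if x = i then 1 else 0, fun i j => ?_, fun h' => absurd h' h⟩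
      rw [delta_dot i j]
  choose C hC1 hC2 using exC
  choose D hD1 hD2 using exD
  set a : Fin m × Fin d → Fin m × Fin d → ℂ :=
    fun I => kronVec (C I.2 I.1) (fun t => if t = I.2 then 1 else 0) with ha
  set b : Fin n × Fin d → Fin n × Fin d → ℂ :=
    fun J => kronVec (D J.2 J.1) (fun t => if t = J.2 then 1 else 0) with hb
  have haON : ∀ I J, star (a I) ⬝ᵥ a J = if I = J then 1 else 0 := by
    rintro ⟨i, s⟩ ⟨j, t⟩
    show star (kronVec (C s i) _) ⬝ᵥ kronVec (C t j) _ = _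
    rw [kronVec_dot, delta_dot]
    rcases eq_or_ne s t with rfl | hst
    · simp [hC1 s i j, Prod.ext_iff]
    · simp [hst, Prod.ext_iff]
  have hbON : ∀ I J, star (b I) ⬝ᵥ b J = if I = J then 1 else 0 := by
    rintro ⟨i, s⟩ ⟨j, t⟩
    show star (kronVec (D s i) _) ⬝ᵥ kronVec (D t j) _ = _
    rw [kronVec_dot, delta_dot]
    rcases eq_or_ne s t with rfl | hst
    · simp [hD1 s i j, Prod.ext_iff]
    · simp [hst, Prod.ext_iff]
  set q : Fin d → ℝ := fun s => if h : (s : ℕ) < k then p ⟨s, h⟩ else 0 with hq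
  have hqnn : ∀ s, 0 ≤ q s := by
    intro s
    show 0 ≤ if h : (s : ℕ) < k then p ⟨s, h⟩ else 0
    split_ifs with h
    · exact hp _
    · exact le_rfl
  set P : (Fin m × Fin d) → (Fin n × Fin d) → ℝ := fun I J =>
    if I.1 = ⟨0, hm⟩ then if J.1 = ⟨0, hn⟩ then if J.2 = I.2 then q I.2 else 0 else 0 else 0
    with hP
  have hPnn : ∀ I J, 0 ≤ P I J := by
    intro I J
    show 0 ≤ if I.1 = ⟨0, hm⟩ then if J.1 = ⟨0, hn⟩ then if J.2 = I.2 then q I.2 else 0 else 0 else 0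
    split_ifs <;> first | exact hqnn _ | exact le_rfl
  have hPsum : ∑ I, ∑ J, P I J = 1 := by
    rw [show ∑ I, ∑ J, P I J = ∑ s : Fin d, q s from
      double_sum_ite (⟨0, hm⟩ : Fin m) (⟨0, hn⟩ : Fin n) (fun _ s _ _ => q s)]
    exact (sum_dite_extend' hk p).trans hp1
  set ρext := ∑ I, ∑ J, (P I J : ℂ) • (vecState (a I) ⊗ₖ vecState (b J)) with hρext
  have hPSD : ∀ I J, ((P I J : ℂ) • (vecState (a I) ⊗ₖ vecState (b J))).PosSemidef := by
    intro I J
    rw [← vecState_kronVec]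
    exact posSemidef_real_smul (vecState_posSemidef _) (hPnn I J)
  refine ⟨ρext, ⟨?_, ?_⟩, ⟨a, b, P, haON, hbON, hPnn, hPsum, hρext⟩, ?_⟩
  · exact posSemidef_sum _ _ fun I _ => posSemidef_sum _ _ fun J _ => hPSD I J
  · rw [hρext, Matrix.trace_sum]
    rw [Finset.sum_congr rfl fun I _ => Matrix.trace_sum _ _]
    have htr : ∀ (I : Fin m × Fin d) (J : Fin n × Fin d),
        ((P I J : ℂ) • (vecState (a I) ⊗ₖ vecState (b J))).trace = (P I J : ℂ) := by
      intro I J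
      rw [Matrix.trace_smul, Matrix.trace_kronecker, trace_vecState, trace_vecState,
        haON I I, hbON J J, if_pos rfl, if_pos rfl]
      simp
    rw [Finset.sum_congr rfl fun I _ => Finset.sum_congr rfl fun J _ => htr I J]
    exact_mod_cast hPsum
  · rw [hρext, ptracePrimes_sum]
    rw [Finset.sum_congr rfl fun I _ => ptracePrimes_sum _ _]
    have h1 : ∀ (I : Fin m × Fin d) (J : Fin n × Fin d),
        ptracePrimes ((P I J : ℂ) • (vecState (a I) ⊗ₖ vecState (b J)))
          = if I.1 = ⟨0, hm⟩ then if J.1 = ⟨0, hn⟩ then if J.2 = I.2 then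
              (q I.2 : ℂ) • (vecState (C I.2 I.1) ⊗ₖ vecState (D J.2 J.1)) else 0 else 0 else 0 := by
      intro I J
      rw [ptracePrimes_smul]
      have h2 : ptracePrimes (vecState (a I) ⊗ₖ vecState (b J))
          = vecState (C I.2 I.1) ⊗ₖ vecState (D J.2 J.1) := by
        show ptracePrimes (vecState (kronVec (C I.2 I.1) _) ⊗ₖ vecState (kronVec (D J.2 J.1) _)) = _
        exact ptracePrimes_pure _ _ _ _ (by rw [delta_dot]; simp) (by rw [delta_dot]; simp)
      rw [h2]
      show ((if I.1 = ⟨0, hm⟩ then if J.1 = ⟨0, hn⟩ then if J.2 = I.2 then q I.2 else 0 else 0 else 0 : ℝ) : ℂ)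
        • (vecState (C I.2 I.1) ⊗ₖ vecState (D J.2 J.1)) = _
      split_ifs <;> simp
    rw [Finset.sum_congr rfl fun I _ => Finset.sum_congr rfl fun J _ => h1 I J]
    rw [double_sum_ite (⟨0, hm⟩ : Fin m) (⟨0, hn⟩ : Fin n)
      (fun i s j t => (q s : ℂ) • (vecState (C s i) ⊗ₖ vecState (D t j)))]
    rw [show (∑ s : Fin d, (q s : ℂ) • (vecState (C s ⟨0, hm⟩) ⊗ₖ vecState (D s ⟨0, hn⟩)))
        = ∑ s : Fin d, (if h : (s : ℕ) < k then
            (p ⟨s, h⟩ : ℂ) • (vecState (A ⟨s, h⟩) ⊗ₖ vecState (B ⟨s, h⟩)) else 0) from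
      Finset.sum_congr rfl fun s _ => by
        by_cases h : (s : ℕ) < k
        · rw [dif_pos h, hC2 s h, hD2 s h]
          show ((if h' : (s : ℕ) < k then p ⟨s, h'⟩ else 0 : ℝ) : ℂ) • _ = _
          rw [dif_pos h]
        · rw [dif_neg h]
          show ((if h' : (s : ℕ) < k then p ⟨s, h'⟩ else 0 : ℝ) : ℂ) • _ = 0
          rw [dif_neg h, Complex.ofReal_zero, zero_smul]]
    exact sum_dite_extend' hk (fun i => (p i : ℂ) • (vecState (A i) ⊗ₖ vecState (B i)))

end Helpers4
section Helpers5
open Matrix Finset Module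

lemma sep_decomp_small {m n : ℕ} (hm : 0 < m) (hn : 0 < n)
    {ρ : Matrix (Fin m × Fin n) (Fin m × Fin n) ℂ} (h : IsSepState ρ) :
    ∃ (k : ℕ), k ≤ m ^ 2 * n ^ 2 ∧
    ∃ (p : Fin k → ℝ) (a : Fin k → Fin m → ℂ) (b : Fin k → Fin n → ℂ),
      (∀ i, 0 ≤ p i) ∧ (∑ i, p i) = 1 ∧
      (∀ i, star (a i) ⬝ᵥ a i = 1) ∧ (∀ i, star (b i) ⬝ᵥ b i = 1) ∧
      ρ = ∑ i, (p i : ℂ) • (vecState (a i) ⊗ₖ vecState (b i)) := by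
  classical
  set S : Set (Matrix (Fin m × Fin n) (Fin m × Fin n) ℂ) :=
    {X | ∃ a b, (star a ⬝ᵥ a = 1) ∧ (star b ⬝ᵥ b = 1) ∧ X = vecState a ⊗ₖ vecState b} with hSdef
  obtain ⟨k₀, p₀, a₀, b₀, hp₀, hp₀1, ha₀, hb₀, hρ₀⟩ := h
  have hsmul : ∀ (r : ℝ) (M : Matrix (Fin m × Fin n) (Fin m × Fin n) ℂ),
      (r : ℂ) • M = r • M := by
    intro r M
    ext i j
    simp [Matrix.smul_apply, Complex.real_smul]
  have hmem : ρ ∈ convexHull ℝ S := by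
    rw [hρ₀, Finset.sum_congr rfl fun i _ => hsmul (p₀ i) _]
    exact (convex_convexHull ℝ S).sum_mem (fun i _ => hp₀ i) hp₀1
      (fun i _ => subset_convexHull ℝ S ⟨a₀ i, b₀ i, ha₀ i, hb₀ i, rfl⟩)
  obtain ⟨ι, hι, z, w, hzS, hzAI, hw0, hw1, hzw⟩ := eq_pos_convex_span_of_mem_convexHull hmem
  letI : Fintype ι := hι
  have hSfact : ∀ X ∈ S, Xᴴ = X ∧ X.trace = 1 := by
    rintro X ⟨a, b, ha, hb, rfl⟩
    rw [← vecState_kronVec]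
    exact ⟨(vecState_posSemidef _).1, by rw [trace_vecState, kronVec_dot, ha, hb, one_mul]⟩
  let T1 : Matrix (Fin m × Fin n) (Fin m × Fin n) ℂ →ₗ[ℝ]
      Matrix (Fin m × Fin n) (Fin m × Fin n) ℂ :=
    { toFun := fun X => Xᴴ - X
      map_add' := fun X Y => by
        show (X + Y)ᴴ - (X + Y) = (Xᴴ - X) + (Yᴴ - Y)
        rw [Matrix.conjTranspose_add]
        abel
      map_smul' := fun r X => by
        show (r • X)ᴴ - r • X = (RingHom.id ℝ) r • (Xᴴ - X)
        rw [Matrix.conjTranspose_smul, star_trivial]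
        simp [smul_sub] }
  let ℓ : Matrix (Fin m × Fin n) (Fin m × Fin n) ℂ →ₗ[ℝ] ℝ :=
    Complex.reLm.comp (Matrix.traceLinearMap (Fin m × Fin n) ℝ ℂ)
  let e : (Fin m × Fin n) ≃ Fin (m * n) := finProdFinEquiv
  let ψmap : Matrix (Fin m × Fin n) (Fin m × Fin n) ℂ →ₗ[ℝ]
      Matrix (Fin m × Fin n) (Fin m × Fin n) ℝ :=
    { toFun := fun X => Matrix.of fun i j =>
        if e i ≤ e j then (X i j).re else (X i j).im
      map_add' := fun X Y => by
        ext i j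
        by_cases hij : e i ≤ e j <;> simp [hij]
      map_smul' := fun r X => by
        ext i j
        by_cases hij : e i ≤ e j <;>
          simp [hij, Complex.real_smul, Complex.re_ofReal_mul, Complex.im_ofReal_mul] }
  have hinj : ∀ X : Matrix (Fin m × Fin n) (Fin m × Fin n) ℂ,
      Xᴴ = X → ψmap X = 0 → X = 0 := by
    intro X hX h0
    have hconj : ∀ i j, X i j = star (X j i) := by
      intro i j
      conv_lhs => rw [← hX]
      rfl
    have h1 : ∀ i j, e i ≤ e j → (X i j).re = 0 := by
      intro i j hij
      have hh := congrFun (congrFun h0 i) j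
      simpa [ψmap, hij] using hh
    have h2 : ∀ i j, ¬ e i ≤ e j → (X i j).im = 0 := by
      intro i j hij
      have hh := congrFun (congrFun h0 i) j
      simpa [ψmap, hij] using hh
    ext i j
    rw [Matrix.zero_apply, Complex.ext_iff, Complex.zero_re, Complex.zero_im]
    by_cases hij : e i ≤ e j
    · by_cases hji : e j ≤ e i
      · have hii : i = j := e.injective (le_antisymm hij hji)
        subst hii
        refine ⟨h1 i i hij, ?_⟩
        have him := congrArg Complex.im (hconj i i)
        simp only [Complex.star_def, Complex.conj_im] at him
        linarith
      · refine ⟨h1 i j hij, ?_⟩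
        have him := congrArg Complex.im (hconj i j)
        simp only [Complex.star_def, Complex.conj_im] at him
        rw [him, h2 j i hji, neg_zero]
    · have hji : e j ≤ e i := le_of_not_ge hij
      refine ⟨?_, h2 i j hij⟩
      have hre := congrArg Complex.re (hconj i j)
      simp only [Complex.star_def, Complex.conj_re] at hre
      rw [hre, h1 j i hji]
  -- dimension bounds
  have hV1 : finrank ℝ (LinearMap.ker T1) ≤ m ^ 2 * n ^ 2 := by
    have hker : LinearMap.ker (ψmap.comp (LinearMap.ker T1).subtype) = ⊥ := by
      rw [LinearMap.ker_eq_bot']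
      intro x hx
      have hXh : (x : Matrix (Fin m × Fin n) (Fin m × Fin n) ℂ)ᴴ = x := by
        have hmem := x.2
        rw [LinearMap.mem_ker] at hmem
        have : (x : Matrix (Fin m × Fin n) (Fin m × Fin n) ℂ)ᴴ - x = 0 := hmem
        rwa [sub_eq_zero] at this
      exact Subtype.ext (hinj x hXh hx)
    have hinj' : Function.Injective (ψmap.comp (LinearMap.ker T1).subtype) :=
      LinearMap.ker_eq_bot.mp hker
    have hb := LinearMap.finrank_le_finrank_of_injective hinj'
    rw [Module.finrank_matrix, Module.finrank_self, Fintype.card_prod,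
      Fintype.card_fin, Fintype.card_fin] at hb
    calc finrank ℝ (LinearMap.ker T1) ≤ m * n * (m * n) * 1 := hb
      _ = m ^ 2 * n ^ 2 := by ring
  have hlt : (LinearMap.ker T1 ⊓ LinearMap.ker ℓ) < LinearMap.ker T1 := by
    rw [lt_iff_le_and_ne]
    refine ⟨inf_le_left, fun heq => ?_⟩
    have h1 : (1 : Matrix (Fin m × Fin n) (Fin m × Fin n) ℂ) ∈ LinearMap.ker T1 := by
      rw [LinearMap.mem_ker]
      show (1 : Matrix (Fin m × Fin n) (Fin m × Fin n) ℂ)ᴴ - 1 = 0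
      rw [Matrix.conjTranspose_one, sub_self]
    rw [← heq] at h1
    have h2 : ℓ 1 = 0 := h1.2
    have h3 : ℓ 1 = (m * n : ℕ) := by
      show ((1 : Matrix (Fin m × Fin n) (Fin m × Fin n) ℂ).trace).re = _
      rw [Matrix.trace_one]
      simp [Fintype.card_prod]
    rw [h3] at h2
    have : 0 < m * n := Nat.mul_pos hm hn
    simp only [Nat.cast_eq_zero] at h2
    omega
  have hWfin : finrank ℝ (LinearMap.ker T1 ⊓ LinearMap.ker ℓ :
      Submodule ℝ (Matrix (Fin m × Fin n) (Fin m × Fin n) ℂ)) ≤ m ^ 2 * n ^ 2 - 1 :=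
    Nat.le_sub_one_of_lt (lt_of_lt_of_le (Submodule.finrank_lt_finrank_of_lt hlt) hV1)
  have hspan : vectorSpan ℝ (Set.range z) ≤ (LinearMap.ker T1 ⊓ LinearMap.ker ℓ) := by
    rw [vectorSpan_def, Submodule.span_le]
    rintro v hv
    rw [Set.mem_vsub] at hv
    obtain ⟨x, hx, y, hy, rfl⟩ := hv
    obtain ⟨x', rfl⟩ := hx
    obtain ⟨y', rfl⟩ := hy
    have hfx := hSfact _ (hzS (Set.mem_range_self x'))
    have hfy := hSfact _ (hzS (Set.mem_range_self y'))
    rw [vsub_eq_sub]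
    refine Submodule.mem_inf.mpr ⟨?_, ?_⟩
    · rw [LinearMap.mem_ker, map_sub]
      show ((z x')ᴴ - z x') - ((z y')ᴴ - z y') = 0
      rw [hfx.1, hfy.1, sub_self, sub_self, sub_zero]
    · rw [LinearMap.mem_ker, map_sub]
      show ((z x').trace).re - ((z y').trace).re = 0
      rw [hfx.2, hfy.2]
      simp
  have hne : Nonempty ι := by
    by_contra hno
    rw [not_nonempty_iff] at hno
    rw [Finset.univ_eq_empty, Finset.sum_empty] at hw1
    exact zero_ne_one hw1
  have hcard : ∃ c, Fintype.card ι = c + 1 :=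
    ⟨Fintype.card ι - 1, (Nat.succ_pred_eq_of_pos Fintype.card_pos).symm⟩
  obtain ⟨c, hc⟩ := hcard
  have hfr := hzAI.finrank_vectorSpan hc
  have hcle : c ≤ m ^ 2 * n ^ 2 - 1 := by
    rw [← hfr]
    exact le_trans (Submodule.finrank_mono hspan) hWfin
  have hkle : Fintype.card ι ≤ m ^ 2 * n ^ 2 := by
    have hpos : 0 < m ^ 2 * n ^ 2 :=
      Nat.mul_pos (Nat.pow_pos (n := 2) hm) (Nat.pow_pos (n := 2) hn)
    omega
  -- produce the decomposition
  let eqv : Fin (Fintype.card ι) ≃ ι := (Fintype.equivFin ι).symm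
  have hzmem : ∀ i : ι, ∃ a b, (star a ⬝ᵥ a = 1) ∧ (star b ⬝ᵥ b = 1) ∧
      z i = vecState a ⊗ₖ vecState b := fun i => hzS (Set.mem_range_self i)
  choose za zb hza hzb hzeq using hzmem
  refine ⟨Fintype.card ι, hkle, fun i => w (eqv i), fun i => za (eqv i), fun i => zb (eqv i),
    fun i => (hw0 _).le, ?_, fun i => hza _, fun i => hzb _, ?_⟩
  · rw [Equiv.sum_comp eqv w]
    exact hw1
  · calc ρ = ∑ i : ι, w i • z i := hzw.symm
      _ = ∑ i : Fin (Fintype.card ι), w (eqv i) • z (eqv i) :=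
          (Equiv.sum_comp eqv (fun i => w i • z i)).symm
      _ = ∑ i, (w (eqv i) : ℂ) • (vecState (za (eqv i)) ⊗ₖ vecState (zb (eqv i))) :=
          Finset.sum_congr rfl fun i _ => by rw [hzeq (eqv i), hsmul]

end Helpers5
section Helpers6
open Matrix Finset

lemma dot_real_smul {α : Type*} [Fintype α] (r : ℝ) (v : α → ℂ) :
    star (fun i => (r : ℂ) * v i) ⬝ᵥ (fun i => (r : ℂ) * v i)
      = ((r * r : ℝ) : ℂ) * (star v ⬝ᵥ v) := by
  simp only [dotProduct, Pi.star_apply, star_mul', Complex.star_def, Complex.conj_ofReal]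
  rw [Finset.mul_sum]
  refine Finset.sum_congr rfl fun i _ => ?_
  push_cast
  ring

lemma vecState_real_smul {α : Type*} (r : ℝ) (v : α → ℂ) :
    vecState (fun i => (r : ℂ) * v i) = ((r * r : ℝ) : ℂ) • vecState v := by
  ext i j
  simp only [vecState, Matrix.smul_apply, star_mul', Complex.star_def, Complex.conj_ofReal,
    smul_eq_mul]
  push_cast
  ring

lemma vecState_zero {α : Type*} : vecState (0 : α → ℂ) = 0 := by
  ext i j
  simp [vecState]

lemma cc_extension_sep {m n d₁ d₂ : ℕ} (hm : 0 < m) (hn : 0 < n)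
    {ρext : Matrix ((Fin m × Fin d₁) × Fin n × Fin d₂) ((Fin m × Fin d₁) × Fin n × Fin d₂) ℂ}
    (hcc : IsCC ρext) {ρ : Matrix (Fin m × Fin n) (Fin m × Fin n) ℂ}
    (htr : ptracePrimes ρext = ρ) : IsSepState ρ := by
  classical
  obtain ⟨a, b, P, haON, hbON, hPnn, hPsum, hρdef⟩ := hcc
  have hu0m : star (fun x : Fin m => if x = ⟨0, hm⟩ then (1:ℂ) else 0) ⬝ᵥ
      (fun x : Fin m => if x = ⟨0, hm⟩ then (1:ℂ) else 0) = 1 := by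
    rw [delta_dot]
    simp
  have hu0n : star (fun x : Fin n => if x = ⟨0, hn⟩ then (1:ℂ) else 0) ⬝ᵥ
      (fun x : Fin n => if x = ⟨0, hn⟩ then (1:ℂ) else 0) = 1 := by
    rw [delta_dot]
    simp
  set cv : (Fin m × Fin d₁) → Fin d₁ → ℝ :=
    fun I s => ∑ i, Complex.normSq (a I (i, s)) with hcv
  set dv : (Fin n × Fin d₂) → Fin d₂ → ℝ :=
    fun J t => ∑ kk, Complex.normSq (b J (kk, t)) with hdv
  have hcv0 : ∀ I s, 0 ≤ cv I s := fun I s =>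
    Finset.sum_nonneg fun i _ => Complex.normSq_nonneg _
  have hdv0 : ∀ J t, 0 ≤ dv J t := fun J t =>
    Finset.sum_nonneg fun i _ => Complex.normSq_nonneg _
  have key : ∀ I J s t, ∃ (qx : ℝ) (ax : Fin m → ℂ) (bx : Fin n → ℂ),
      0 ≤ qx ∧ star ax ⬝ᵥ ax = 1 ∧ star bx ⬝ᵥ bx = 1 ∧
      (qx : ℂ) • (vecState ax ⊗ₖ vecState bx)
        = (P I J : ℂ) • (vecState (fun i => a I (i, s)) ⊗ₖ vecState (fun kk => b J (kk, t))) ∧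
      qx = P I J * (cv I s * dv J t) := by
    intro I J s t
    by_cases hc : cv I s = 0
    · have hv0 : (fun i => a I (i, s)) = (0 : Fin m → ℂ) := by
        funext i
        have h0 := (Finset.sum_eq_zero_iff_of_nonneg
          (fun i _ => Complex.normSq_nonneg (a I (i, s)))).mp hc i (Finset.mem_univ i)
        exact Complex.normSq_eq_zero.mp h0
      refine ⟨0, _, _, le_rfl, hu0m, hu0n, ?_, by rw [hc]; ring⟩
      rw [hv0, vecState_zero, Matrix.zero_kronecker, smul_zero, Complex.ofReal_zero, zero_smul]
    · by_cases hd : dv J t = 0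
      · have hw0 : (fun kk => b J (kk, t)) = (0 : Fin n → ℂ) := by
          funext i
          have h0 := (Finset.sum_eq_zero_iff_of_nonneg
            (fun i _ => Complex.normSq_nonneg (b J (i, t)))).mp hd i (Finset.mem_univ i)
          exact Complex.normSq_eq_zero.mp h0
        refine ⟨0, _, _, le_rfl, hu0m, hu0n, ?_, by rw [hd]; ring⟩
        rw [hw0, vecState_zero, Matrix.kronecker_zero, smul_zero, Complex.ofReal_zero, zero_smul]
      · -- both nonzero: normalize
        have hcpos : 0 < cv I s := lt_of_le_of_ne (hcv0 I s) (Ne.symm hc)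
        have hdpos : 0 < dv J t := lt_of_le_of_ne (hdv0 J t) (Ne.symm hd)
        have hcs : Real.sqrt (cv I s) * Real.sqrt (cv I s) = cv I s :=
          Real.mul_self_sqrt (hcv0 I s)
        have hds : Real.sqrt (dv J t) * Real.sqrt (dv J t) = dv J t :=
          Real.mul_self_sqrt (hdv0 J t)
        refine ⟨P I J * (cv I s * dv J t),
          fun i => (((Real.sqrt (cv I s))⁻¹ : ℝ) : ℂ) * a I (i, s),
          fun kk => (((Real.sqrt (dv J t))⁻¹ : ℝ) : ℂ) * b J (kk, t),
          mul_nonneg (hPnn I J) (mul_nonneg (hcv0 I s) (hdv0 J t)), ?_, ?_, ?_, rfl⟩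
        · rw [dot_real_smul ((Real.sqrt (cv I s))⁻¹) (fun i => a I (i, s)), dot_self_coe]
          rw [show (∑ i, Complex.normSq (a I (i, s))) = cv I s from rfl]
          rw [← Complex.ofReal_mul]
          rw [show (Real.sqrt (cv I s))⁻¹ * (Real.sqrt (cv I s))⁻¹ * cv I s = 1 by
            rw [← mul_inv, hcs]; field_simp]
          exact Complex.ofReal_one
        · rw [dot_real_smul ((Real.sqrt (dv J t))⁻¹) (fun kk => b J (kk, t)), dot_self_coe]
          rw [show (∑ kk, Complex.normSq (b J (kk, t))) = dv J t from rfl]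
          rw [← Complex.ofReal_mul]
          rw [show (Real.sqrt (dv J t))⁻¹ * (Real.sqrt (dv J t))⁻¹ * dv J t = 1 by
            rw [← mul_inv, hds]; field_simp]
          exact Complex.ofReal_one
        · rw [vecState_real_smul ((Real.sqrt (cv I s))⁻¹) (fun i => a I (i, s)),
            vecState_real_smul ((Real.sqrt (dv J t))⁻¹) (fun kk => b J (kk, t)),
            Matrix.smul_kronecker, Matrix.kronecker_smul, smul_smul, smul_smul]
          congr 1
          rw [← Complex.ofReal_mul, ← Complex.ofReal_mul]
          congr 1
          rw [← mul_inv, ← mul_inv, hcs, hds]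
          field_simp
  choose qf af bf hq0 hax hbx heq hqf using key
  have hsum_cv : ∀ I, ∑ s, cv I s = 1 := by
    intro I
    have h1 := haON I I
    rw [if_pos rfl, dot_self_coe] at h1
    have h2 : (∑ q : Fin m × Fin d₁, Complex.normSq (a I q)) = 1 := by exact_mod_cast h1
    rw [← h2, Fintype.sum_prod_type]
    exact Finset.sum_comm
  have hsum_dv : ∀ J, ∑ t, dv J t = 1 := by
    intro J
    have h1 := hbON J J
    rw [if_pos rfl, dot_self_coe] at h1
    have h2 : (∑ q : Fin n × Fin d₂, Complex.normSq (b J q)) = 1 := by exact_mod_cast h1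
    rw [← h2, Fintype.sum_prod_type]
    exact Finset.sum_comm
  have hqIJ : ∀ I J, ∑ s, ∑ t, qf I J s t = P I J := by
    intro I J
    rw [Finset.sum_congr rfl fun s _ => Finset.sum_congr rfl fun t _ => hqf I J s t]
    have : ∑ s, ∑ t, P I J * (cv I s * dv J t)
        = P I J * ((∑ s, cv I s) * (∑ t, dv J t)) := by
      rw [Finset.sum_mul_sum, Finset.mul_sum]
      refine Finset.sum_congr rfl fun s _ => ?_
      rw [Finset.mul_sum]
    rw [this, hsum_cv I, hsum_dv J, one_mul, mul_one]
  have hqsum : ∑ I, ∑ J, ∑ s, ∑ t, qf I J s t = 1 := by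
    rw [Finset.sum_congr rfl fun I _ => Finset.sum_congr rfl fun J _ => hqIJ I J]
    exact hPsum
  have hρ1 : ρ = ∑ I, ∑ J, ∑ s, ∑ t, (qf I J s t : ℂ) •
      (vecState (af I J s t) ⊗ₖ vecState (bf I J s t)) := by
    have hIJ : ∀ I J, ptracePrimes ((P I J : ℂ) • (vecState (a I) ⊗ₖ vecState (b J)))
        = ∑ s, ∑ t, (P I J : ℂ) •
          (vecState (fun i => a I (i, s)) ⊗ₖ vecState (fun kk => b J (kk, t))) := by
      intro I J
      rw [ptracePrimes_smul, ptracePrimes_kron, Finset.smul_sum]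
      exact Finset.sum_congr rfl fun s _ => Finset.smul_sum
    rw [← htr, hρdef, ptracePrimes_sum]
    rw [Finset.sum_congr rfl fun I _ =>
      (ptracePrimes_sum _ _).trans (Finset.sum_congr rfl fun J _ => hIJ I J)]
    exact Finset.sum_congr rfl fun I _ => Finset.sum_congr rfl fun J _ =>
      Finset.sum_congr rfl fun s _ => Finset.sum_congr rfl fun t _ => (heq I J s t).symm
  -- flatten to a single Fin-indexed family
  set ι : Type := (Fin m × Fin d₁) × (Fin n × Fin d₂) × Fin d₁ × Fin d₂ with hι
  let eqv : Fin (Fintype.card ι) ≃ ι := (Fintype.equivFin ι).symm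
  have hρ2 : ∑ x : ι, (qf x.1 x.2.1 x.2.2.1 x.2.2.2 : ℂ) •
      (vecState (af x.1 x.2.1 x.2.2.1 x.2.2.2) ⊗ₖ vecState (bf x.1 x.2.1 x.2.2.1 x.2.2.2))
      = ∑ I, ∑ J, ∑ s, ∑ t, (qf I J s t : ℂ) •
      (vecState (af I J s t) ⊗ₖ vecState (bf I J s t)) := by
    rw [Fintype.sum_prod_type]
    refine Finset.sum_congr rfl fun I _ => ?_
    rw [Fintype.sum_prod_type]
    refine Finset.sum_congr rfl fun J _ => ?_
    rw [Fintype.sum_prod_type]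
  have hq2 : ∑ x : ι, qf x.1 x.2.1 x.2.2.1 x.2.2.2
      = ∑ I, ∑ J, ∑ s, ∑ t, qf I J s t := by
    rw [Fintype.sum_prod_type]
    refine Finset.sum_congr rfl fun I _ => ?_
    rw [Fintype.sum_prod_type]
    refine Finset.sum_congr rfl fun J _ => ?_
    rw [Fintype.sum_prod_type]
  refine ⟨Fintype.card ι,
    fun i => qf (eqv i).1 (eqv i).2.1 (eqv i).2.2.1 (eqv i).2.2.2,
    fun i => af (eqv i).1 (eqv i).2.1 (eqv i).2.2.1 (eqv i).2.2.2,
    fun i => bf (eqv i).1 (eqv i).2.1 (eqv i).2.2.1 (eqv i).2.2.2,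
    fun i => hq0 _ _ _ _, ?_, fun i => hax _ _ _ _, fun i => hbx _ _ _ _, ?_⟩
  · exact (Equiv.sum_comp eqv (fun x : ι => qf x.1 x.2.1 x.2.2.1 x.2.2.2)).trans
      (hq2.trans hqsum)
  · exact hρ1.trans (hρ2.symm.trans
      (Equiv.sum_comp eqv (fun x : ι => (qf x.1 x.2.1 x.2.2.1 x.2.2.2 : ℂ) •
      (vecState (af x.1 x.2.1 x.2.2.1 x.2.2.2) ⊗ₖ
        vecState (bf x.1 x.2.1 x.2.2.1 x.2.2.2)))).symm)
end Helpers6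

/-- A bipartite state is separable iff it has a classical-classical
extension (across the `(AA')|(BB')` cut); moreover, when separable such an extension
exists with `d₁ = d₂ = m²n²`. -/
theorem sep_iff_cc_extension
    (m n : ℕ) (ρAB : Matrix (Fin m × Fin n) (Fin m × Fin n) ℂ) (hρ : IsState ρAB) :
    (IsSepState ρAB ↔ ∃ (d₁ d₂ : ℕ), 0 < d₁ ∧ 0 < d₂ ∧
      ∃ ρext : Matrix ((Fin m × Fin d₁) × Fin n × Fin d₂)
          ((Fin m × Fin d₁) × Fin n × Fin d₂) ℂ,
        IsState ρext ∧ IsCC ρext ∧ ptracePrimes ρext = ρAB) ∧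
    (IsSepState ρAB →
      ∃ ρext : Matrix ((Fin m × Fin (m ^ 2 * n ^ 2)) × Fin n × Fin (m ^ 2 * n ^ 2))
          ((Fin m × Fin (m ^ 2 * n ^ 2)) × Fin n × Fin (m ^ 2 * n ^ 2)) ℂ,
        IsState ρext ∧ IsCC ρext ∧ ptracePrimes ρext = ρAB) := by
  have hm : 0 < m := by
    rcases Nat.eq_zero_or_pos m with h0 | h
    · exfalso
      have htr1 := hρ.2
      subst h0
      have : IsEmpty (Fin 0 × Fin n) := by infer_instance
      rw [Matrix.trace, Finset.univ_eq_empty, Finset.sum_empty] at htr1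
      exact zero_ne_one htr1
    · exact h
  have hn : 0 < n := by
    rcases Nat.eq_zero_or_pos n with h0 | h
    · exfalso
      have htr1 := hρ.2
      subst h0
      have : IsEmpty (Fin m × Fin 0) := by infer_instance
      rw [Matrix.trace, Finset.univ_eq_empty, Finset.sum_empty] at htr1
      exact zero_ne_one htr1
    · exact h
  have hdpos : 0 < m ^ 2 * n ^ 2 :=
    Nat.mul_pos (Nat.pow_pos (n := 2) hm) (Nat.pow_pos (n := 2) hn)
  have main2 : IsSepState ρAB →
      ∃ ρext : Matrix ((Fin m × Fin (m ^ 2 * n ^ 2)) × Fin n × Fin (m ^ 2 * n ^ 2))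
          ((Fin m × Fin (m ^ 2 * n ^ 2)) × Fin n × Fin (m ^ 2 * n ^ 2)) ℂ,
        IsState ρext ∧ IsCC ρext ∧ ptracePrimes ρext = ρAB := by
    intro hsep
    obtain ⟨k, hk, p, a, b, hp, hp1, ha, hb, hρeq⟩ := sep_decomp_small hm hn hsep
    obtain ⟨ρext, h1, h2, h3⟩ := extension_of_decomp hm hn hk p a b hp hp1 ha hb
    exact ⟨ρext, h1, h2, h3.trans hρeq.symm⟩
  refine ⟨⟨?_, ?_⟩, main2⟩
  · intro hsep
    obtain ⟨ρext, h1, h2, h3⟩ := main2 hsep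
    exact ⟨m ^ 2 * n ^ 2, m ^ 2 * n ^ 2, hdpos, hdpos, ρext, h1, h2, h3⟩
  · rintro ⟨d₁, d₂, hd₁, hd₂, ρext, hstate, hcc, htr⟩
    exact cc_extension_sep hm hn hcc htr
end

section
/- For every Hermitian (mn)×(mn) complex matrix M (indices identified with pairs (i,k), i∈Fin m, k∈Fin n), the trace norm does not increase under the partial trace over the second factor: ‖tr_B M‖₁ ≤ ‖M‖₁. -/
open scoped Kronecker ComplexOrder Matrix

open Matrix

lemma conj_sandwich {α : Type*} [Fintype α] [DecidableEq α] (U : Matrix α α ℂ) (hUU : star U * U = 1)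
    (X Y : Matrix α α ℂ) :
    (U * X * star U) * (U * Y * star U) = U * (X * Y) * star U := by
  simp only [Matrix.mul_assoc]
  rw [← Matrix.mul_assoc (star U) U, hUU, Matrix.one_mul]

lemma traceNorm_eq_sum_abs {α : Type*} [Fintype α] [DecidableEq α]
    {A : Matrix α α ℂ} (hA : A.IsHermitian) :
    traceNorm A = ∑ i, |hA.eigenvalues i| := by
  set U : Matrix α α ℂ := (hA.eigenvectorUnitary : Matrix α α ℂ) with hU
  have hUU : star U * U = 1 := mem_unitaryGroup_iff'.mp hA.eigenvectorUnitary.2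
  have hH : (Aᴴ * A).IsHermitian := (posSemidef_conjTranspose_mul_self A).1
  have e1 : traceNorm A = (hH.cfc Real.sqrt).trace.re := by
    rw [traceNorm, IsHermitian.cfc, Unitary.conjStarAlgAut_apply]; rfl
  have hA2 : Aᴴ * A = A ^ 2 := by rw [hA.eq, pow_two]
  have e2 : hH.cfc Real.sqrt = hA.cfc (fun x => |x|) := by
    rw [← hH.cfc_eq, ← hA.cfc_eq, hA2, ← cfc_comp_pow Real.sqrt 2 A]
    exact cfc_congr fun x _ => Real.sqrt_sq_eq_abs x
  rw [e1, e2, IsHermitian.cfc, Unitary.conjStarAlgAut_apply, Matrix.trace_mul_cycle,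
    ← hU, hUU, Matrix.one_mul, Matrix.trace_diagonal]
  rw [Complex.re_sum]
  simp

lemma norm_diag_le_one_of_unitary {α : Type*} [Fintype α] [DecidableEq α]
    {V : Matrix α α ℂ} (hV : V ∈ Matrix.unitaryGroup α ℂ) (j : α) :
    ‖V j j‖ ≤ 1 := by
  have h1 : (star V * V) j j = 1 := by rw [mem_unitaryGroup_iff'.mp hV]; simp
  have h2 : ∑ i, Complex.normSq (V i j) = 1 := by
    have := congrArg Complex.re h1
    simpa [Matrix.mul_apply, Matrix.star_apply, Complex.mul_re, Complex.normSq_apply,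
      Complex.star_def] using this
  have h3 : Complex.normSq (V j j) ≤ 1 := by
    rw [← h2]
    exact Finset.single_le_sum (f := fun i => Complex.normSq (V i j))
      (fun i _ => Complex.normSq_nonneg _) (Finset.mem_univ j)
  have := Complex.sq_norm (V j j)
  nlinarith [norm_nonneg (V j j)]

lemma trace_mul_re_le {α : Type*} [Fintype α] [DecidableEq α]
    {M : Matrix α α ℂ} (hM : M.IsHermitian) {C : Matrix α α ℂ}
    (hC : C ∈ Matrix.unitaryGroup α ℂ) :
    (Matrix.trace (C * M)).re ≤ ∑ i, |hM.eigenvalues i| := by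
  set U : Matrix α α ℂ := (hM.eigenvectorUnitary : Matrix α α ℂ) with hU
  have hUmem : U ∈ Matrix.unitaryGroup α ℂ := hM.eigenvectorUnitary.2
  set V : Matrix α α ℂ := star U * C * U with hV
  have hVmem : V ∈ Matrix.unitaryGroup α ℂ :=
    mul_mem (mul_mem (Unitary.star_mem hUmem) hC) hUmem
  have hspec := hM.spectral_theorem
  rw [Unitary.conjStarAlgAut_apply, ← hU] at hspec
  have key : Matrix.trace (C * M) = ∑ j, V j j * (hM.eigenvalues j : ℂ) := by
    conv_lhs => rw [hspec]
    rw [show C * (U * diagonal (RCLike.ofReal ∘ hM.eigenvalues) * star U)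
        = (C * U * diagonal (RCLike.ofReal ∘ hM.eigenvalues)) * star U by
      simp only [Matrix.mul_assoc]]
    rw [Matrix.trace_mul_cycle]
    rw [Matrix.trace]
    congr 1
    funext j
    simp [Matrix.diag, Matrix.mul_diagonal, hV, Matrix.mul_assoc]
  rw [key, Complex.re_sum]
  apply Finset.sum_le_sum
  intro j _
  have hle := norm_diag_le_one_of_unitary hVmem j
  have hre : (V j j * (hM.eigenvalues j : ℂ)).re = (V j j).re * hM.eigenvalues j := by
    simp [Complex.mul_re]
  rw [hre]
  calc (V j j).re * hM.eigenvalues j ≤ |(V j j).re * hM.eigenvalues j| := le_abs_self _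
    _ = |(V j j).re| * |hM.eigenvalues j| := abs_mul _ _
    _ ≤ 1 * |hM.eigenvalues j| := by
        apply mul_le_mul_of_nonneg_right _ (abs_nonneg _)
        exact le_trans (Complex.abs_re_le_norm _) hle
    _ = |hM.eigenvalues j| := one_mul _


lemma ptrace2_isHermitian {α β : Type*} [Fintype β]
    {M : Matrix (α × β) (α × β) ℂ} (hM : M.IsHermitian) :
    (ptrace2 M).IsHermitian := by
  ext i i'
  simp only [conjTranspose_apply, ptrace2, star_sum]
  congr 1
  funext k
  have := congrFun (congrFun hM (i, k)) (i', k)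
  simpa [Matrix.conjTranspose_apply] using this

lemma trace_kron_one_mul {α β : Type*} [Fintype α] [Fintype β] [DecidableEq β]
    (Q : Matrix α α ℂ) (M : Matrix (α × β) (α × β) ℂ) :
    Matrix.trace ((Q ⊗ₖ (1 : Matrix β β ℂ)) * M) = Matrix.trace (Q * ptrace2 M) := by
  have lhs : Matrix.trace ((Q ⊗ₖ (1 : Matrix β β ℂ)) * M)
      = ∑ i, ∑ k, ∑ i', Q i i' * M (i', k) (i, k) := by
    rw [Matrix.trace]
    simp only [Matrix.diag, Matrix.mul_apply, Matrix.kroneckerMap_apply, Matrix.one_apply,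
      Fintype.sum_prod_type, ite_mul, one_mul, zero_mul, mul_ite, mul_zero,
      Finset.sum_ite_eq, Finset.mem_univ, if_true, mul_one]
  rw [lhs, Matrix.trace]
  simp only [Matrix.diag, Matrix.mul_apply, ptrace2, Finset.mul_sum]
  refine Finset.sum_congr rfl fun i _ => ?_
  rw [Finset.sum_comm]

lemma kron_one_mem_unitary {α β : Type*} [Fintype α] [Fintype β] [DecidableEq α] [DecidableEq β]
    {Q : Matrix α α ℂ} (hQ : Q ∈ Matrix.unitaryGroup α ℂ) :
    (Q ⊗ₖ (1 : Matrix β β ℂ)) ∈ Matrix.unitaryGroup (α × β) ℂ := by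
  rw [mem_unitaryGroup_iff']
  have hstar : star (Q ⊗ₖ (1 : Matrix β β ℂ)) = (star Q) ⊗ₖ (1 : Matrix β β ℂ) := by
    ext p q
    simp [Matrix.star_apply, Matrix.kroneckerMap_apply, Matrix.one_apply, eq_comm]
    split <;> simp
  rw [hstar, ← Matrix.mul_kronecker_mul, mem_unitaryGroup_iff'.mp hQ]
  simp

/-- The trace norm does not increase under the partial trace over
the second factor: `‖tr_B M‖₁ ≤ ‖M‖₁` for Hermitian `M`. -/
theorem traceNorm_ptrace2_le (m n : ℕ)
    (M : Matrix (Fin m × Fin n) (Fin m × Fin n) ℂ) (hM : M.IsHermitian) :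
    traceNorm (ptrace2 M) ≤ traceNorm M := by
  have h2 : (ptrace2 M).IsHermitian := ptrace2_isHermitian hM
  set U : Matrix (Fin m) (Fin m) ℂ := (h2.eigenvectorUnitary : Matrix (Fin m) (Fin m) ℂ)
    with hU
  have hUmem : U ∈ Matrix.unitaryGroup (Fin m) ℂ := h2.eigenvectorUnitary.2
  have hUU : star U * U = 1 := mem_unitaryGroup_iff'.mp hUmem
  set s : Fin m → ℂ := fun i => if h2.eigenvalues i < 0 then -1 else 1 with hs
  have hsmem : Matrix.diagonal s ∈ Matrix.unitaryGroup (Fin m) ℂ := by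
    rw [mem_unitaryGroup_iff', Matrix.star_eq_conjTranspose, Matrix.diagonal_conjTranspose,
      Matrix.diagonal_mul_diagonal, ← Matrix.diagonal_one]
    refine congrArg Matrix.diagonal (funext fun i => ?_)
    simp only [hs, Pi.star_apply]
    split <;> simp
  set Q : Matrix (Fin m) (Fin m) ℂ := U * Matrix.diagonal s * star U with hQ
  have hQmem : Q ∈ Matrix.unitaryGroup (Fin m) ℂ :=
    mul_mem (mul_mem hUmem hsmem) (Unitary.star_mem hUmem)
  have hspec := h2.spectral_theorem
  rw [Unitary.conjStarAlgAut_apply, ← hU] at hspec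
  have htr : Matrix.trace (Q * ptrace2 M) = ∑ i, s i * (h2.eigenvalues i : ℂ) := by
    conv_lhs => rw [hQ, hspec, conj_sandwich U hUU, Matrix.diagonal_mul_diagonal]
    rw [Matrix.trace_mul_cycle, hUU, Matrix.one_mul, Matrix.trace_diagonal]
    simp [Function.comp]
  have hre : (Matrix.trace (Q * ptrace2 M)).re = ∑ i, |h2.eigenvalues i| := by
    rw [htr, Complex.re_sum]
    refine Finset.sum_congr rfl fun i _ => ?_
    simp only [hs]
    split
    · rename_i hneg
      rw [abs_of_neg hneg]
      simp
    · rename_i hpos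
      rw [abs_of_nonneg (not_lt.mp hpos)]
      simp
  have key : (Matrix.trace ((Q ⊗ₖ (1 : Matrix (Fin n) (Fin n) ℂ)) * M)).re
      = ∑ i, |h2.eigenvalues i| := by rw [trace_kron_one_mul, hre]
  calc traceNorm (ptrace2 M) = ∑ i, |h2.eigenvalues i| := traceNorm_eq_sum_abs h2
    _ = (Matrix.trace ((Q ⊗ₖ (1 : Matrix (Fin n) (Fin n) ℂ)) * M)).re := key.symm
    _ ≤ ∑ j, |hM.eigenvalues j| := trace_mul_re_le hM (kron_one_mem_unitary hQmem)
    _ = traceNorm M := (traceNorm_eq_sum_abs hM).symm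
end
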